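/- Let m ∈ ℕ and k ∈ ℕ. Then the limit as u → 0⁺ of (Γ(m+1, k·u) − Γ(m+1, (k+1)·u)) / u^{m+1} equals ((k+1)^{m+1} − k^{m+1}) / (m+1), where Γ is the upper incomplete gamma function. -/

import Mathlib

open Real MeasureTheory Filter

/-- The upper incomplete gamma function Γ(a, x) = ∫_x^∞ t^{a−1} e^{−t} dt. -/
noncomputable def upperGamma (a x : ℝ) : ℝ :=
  ∫ t in Set.Ioi x, t ^ (a - 1) * Real.exp (-t)

lemma key_eq (m : ℕ) :
    (fun t : ℝ => t ^ ((m : ℝ) + 1 - 1) * Real.exp (-t)) =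
      fun t : ℝ => t ^ m * Real.exp (-t) := by
  funext t
  rw [add_sub_cancel_right, Real.rpow_natCast]

lemma intgr (m : ℕ) {x : ℝ} (hx : 0 ≤ x) :
    IntegrableOn (fun t : ℝ => t ^ m * Real.exp (-t)) (Set.Ioi x) := by
  have h := Real.GammaIntegral_convergent (s := (m : ℝ) + 1) (by positivity)
  have h2 : IntegrableOn (fun t : ℝ => t ^ m * Real.exp (-t)) (Set.Ioi 0) := by
    refine h.congr_fun (fun t _ => ?_) measurableSet_Ioi
    rw [add_sub_cancel_right]
    beta_reduce
    rw [Real.rpow_natCast, mul_comm]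
  exact h2.mono_set (Set.Ioi_subset_Ioi hx)

lemma uG_diff (m : ℕ) {x y : ℝ} (hx : 0 ≤ x) (hxy : x ≤ y) :
    upperGamma ((m : ℝ) + 1) x - upperGamma ((m : ℝ) + 1) y =
      ∫ t in x..y, t ^ m * Real.exp (-t) := by
  have hy : (0:ℝ) ≤ y := hx.trans hxy
  unfold upperGamma
  rw [key_eq]
  rw [intervalIntegral.integral_of_le hxy]
  have hsplit : (∫ t in Set.Ioi x, t ^ m * Real.exp (-t)) =
      (∫ t in Set.Ioc x y, t ^ m * Real.exp (-t)) +
        ∫ t in Set.Ioi y, t ^ m * Real.exp (-t) := by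
    rw [← setIntegral_union (Set.Ioc_disjoint_Ioi le_rfl) measurableSet_Ioi
      ((intgr m hx).mono_set Set.Ioc_subset_Ioi_self) (intgr m hy),
      Set.Ioc_union_Ioi_eq_Ioi hxy]
  rw [hsplit]; ring

/-- the limit of (Γ(m+1, k·u) − Γ(m+1, (k+1)·u)) / u^{m+1} as u → 0⁺
equals ((k+1)^{m+1} − k^{m+1}) / (m+1). -/
theorem upperGamma_diff_div_pow_tendsto
    (m k : ℕ) :
    Filter.Tendsto
      (fun u : ℝ =>
        (upperGamma ((m : ℝ) + 1) ((k : ℝ) * u) -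
          upperGamma ((m : ℝ) + 1) (((k : ℝ) + 1) * u)) / u ^ (m + 1))
      (nhdsWithin 0 (Set.Ioi 0))
      (nhds ((((k : ℝ) + 1) ^ (m + 1) - (k : ℝ) ^ (m + 1)) / ((m : ℝ) + 1))) := by
  set L : ℝ := (((k : ℝ) + 1) ^ (m + 1) - (k : ℝ) ^ (m + 1)) / ((m : ℝ) + 1) with hL
  have hL0 : 0 ≤ L := by
    apply div_nonneg _ (by positivity)
    have : (k : ℝ) ^ (m + 1) ≤ ((k : ℝ) + 1) ^ (m + 1) :=
      pow_le_pow_left₀ (by positivity) (by linarith) _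
    linarith
  -- key per-u bounds
  have key : ∀ u : ℝ, u ∈ Set.Ioi (0:ℝ) →
      Real.exp (-(((k : ℝ) + 1) * u)) * L ≤
        (upperGamma ((m : ℝ) + 1) ((k : ℝ) * u) -
          upperGamma ((m : ℝ) + 1) (((k : ℝ) + 1) * u)) / u ^ (m + 1) ∧
      (upperGamma ((m : ℝ) + 1) ((k : ℝ) * u) -
          upperGamma ((m : ℝ) + 1) (((k : ℝ) + 1) * u)) / u ^ (m + 1) ≤ L := by
    intro u hu
    simp only [Set.mem_Ioi] at hu
    set a : ℝ := (k : ℝ) * u with ha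
    set b : ℝ := ((k : ℝ) + 1) * u with hb
    have ha0 : 0 ≤ a := by positivity
    have hab : a ≤ b := by nlinarith
    have hupow : 0 < u ^ (m + 1) := by positivity
    have hdiff := uG_diff m ha0 hab
    have hpowint : (∫ t in a..b, (t : ℝ) ^ m) = L * u ^ (m + 1) := by
      rw [integral_pow, hL, ha, hb, mul_pow, mul_pow]
      push_cast
      ring
    have hc1 : IntervalIntegrable (fun t : ℝ => t ^ m * Real.exp (-t)) volume a b :=
      (by continuity : Continuous fun t : ℝ => t ^ m * Real.exp (-t)).intervalIntegrable a b
    have hc2 : IntervalIntegrable (fun t : ℝ => (t : ℝ) ^ m) volume a b :=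
      (continuous_pow m).intervalIntegrable a b
    have hc3 : IntervalIntegrable (fun t : ℝ => Real.exp (-b) * t ^ m) volume a b :=
      ((continuous_const).mul (continuous_pow m)).intervalIntegrable a b
    have hupper : (∫ t in a..b, t ^ m * Real.exp (-t)) ≤ ∫ t in a..b, (t : ℝ) ^ m := by
      apply intervalIntegral.integral_mono_on hab hc1 hc2
      intro t ht
      rw [Set.mem_Icc] at ht
      have ht0 : 0 ≤ t := ha0.trans ht.1
      calc t ^ m * Real.exp (-t) ≤ t ^ m * 1 := by
            apply mul_le_mul_of_nonneg_left _ (by positivity)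
            exact Real.exp_le_one_iff.mpr (by linarith)
        _ = t ^ m := mul_one _
    have hlower : (∫ t in a..b, Real.exp (-b) * t ^ m) ≤
        ∫ t in a..b, t ^ m * Real.exp (-t) := by
      apply intervalIntegral.integral_mono_on hab hc3 hc1
      intro t ht
      rw [Set.mem_Icc] at ht
      have ht0 : 0 ≤ t := ha0.trans ht.1
      calc Real.exp (-b) * t ^ m ≤ Real.exp (-t) * t ^ m :=
            mul_le_mul_of_nonneg_right (Real.exp_le_exp.mpr (by linarith [ht.2])) (by positivity)
        _ = t ^ m * Real.exp (-t) := mul_comm _ _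
    rw [intervalIntegral.integral_const_mul, hpowint] at hlower
    rw [hpowint] at hupper
    rw [hdiff]
    constructor
    · rw [le_div_iff₀ hupow]
      calc Real.exp (-(((k:ℝ)+1) * u)) * L * u ^ (m+1)
          = Real.exp (-b) * (L * u ^ (m+1)) := by rw [hb]; ring
        _ ≤ _ := hlower
    · rw [div_le_iff₀ hupow]
      calc (∫ t in a..b, t ^ m * Real.exp (-t)) ≤ L * u ^ (m+1) := hupper
        _ = L * u ^ (m+1) := rfl
  have hlo : Filter.Tendsto (fun u : ℝ => Real.exp (-(((k : ℝ) + 1) * u)) * L)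
      (nhdsWithin 0 (Set.Ioi 0)) (nhds L) := by
    have : Continuous fun u : ℝ => Real.exp (-(((k : ℝ) + 1) * u)) * L := by continuity
    have h := (this.tendsto 0).mono_left (nhdsWithin_le_nhds (s := Set.Ioi 0))
    simpa using h
  refine tendsto_of_tendsto_of_tendsto_of_le_of_le' hlo tendsto_const_nhds ?_ ?_
  · filter_upwards [self_mem_nhdsWithin] with u hu using (key u hu).1
  · filter_upwards [self_mem_nhdsWithin] with u hu using (key u hu).2
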